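/- Let α, β > 0 and let b ∈ ℝ^{n+m}. For every initial vector u⁰ ∈ ℝ^{n+m}, the sequence defined by u^{k+1} = M_{α,β}⁻¹ (N_{α,β} u^k + b) converges to the unique solution u* of the linear system 𝒜 u = b. -/

import Mathlib

open Matrix Filter

namespace MGSSaux

variable {n m : ℕ}

/-- The weighted quadratic form `q x = α‖x₁‖² + β‖x₂‖²`. -/
noncomputable def q (α β : ℝ) (x : Fin n ⊕ Fin m → ℝ) : ℝ :=
  α * ((x ∘ Sum.inl) ⬝ᵥ (x ∘ Sum.inl)) + β * ((x ∘ Sum.inr) ⬝ᵥ (x ∘ Sum.inr))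

lemma dot_self_nonneg {k : ℕ} (v : Fin k → ℝ) : 0 ≤ v ⬝ᵥ v :=
  Finset.sum_nonneg fun _ _ => mul_self_nonneg _

lemma q_nonneg {α β : ℝ} (hα : 0 ≤ α) (hβ : 0 ≤ β) (x : Fin n ⊕ Fin m → ℝ) :
    0 ≤ q α β x :=
  add_nonneg (mul_nonneg hα (dot_self_nonneg _)) (mul_nonneg hβ (dot_self_nonneg _))

lemma q_eq_zero {α β : ℝ} (hα : 0 < α) (hβ : 0 < β) {x : Fin n ⊕ Fin m → ℝ}
    (h : q α β x = 0) : x = 0 := by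
  have d1 := dot_self_nonneg (x ∘ Sum.inl)
  have d2 := dot_self_nonneg (x ∘ Sum.inr)
  unfold q at h
  have h1 : (x ∘ Sum.inl) ⬝ᵥ (x ∘ Sum.inl) = 0 := by nlinarith
  have h2 : (x ∘ Sum.inr) ⬝ᵥ (x ∘ Sum.inr) = 0 := by nlinarith
  rw [dotProduct_self_eq_zero] at h1 h2
  funext i
  cases i with
  | inl i => exact congrFun h1 i
  | inr i => exact congrFun h2 i

lemma q_smul (α β t : ℝ) (x : Fin n ⊕ Fin m → ℝ) :
    q α β (t • x) = t ^ 2 * q α β x := by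
  have h1 : (t • x) ∘ Sum.inl = t • (x ∘ Sum.inl) := rfl
  have h2 : (t • x) ∘ Sum.inr = t • (x ∘ Sum.inr) := rfl
  rw [q, q, h1, h2, smul_dotProduct, dotProduct_smul, smul_dotProduct, dotProduct_smul]
  simp only [smul_eq_mul]
  ring

lemma q_coord {α β : ℝ} (hα : 0 < α) (hβ : 0 < β) (x : Fin n ⊕ Fin m → ℝ)
    (i : Fin n ⊕ Fin m) : min α β * (x i) ^ 2 ≤ q α β x := by
  have h1 : 0 ≤ (x ∘ Sum.inl) ⬝ᵥ (x ∘ Sum.inl) := dot_self_nonneg _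
  have h2 : 0 ≤ (x ∘ Sum.inr) ⬝ᵥ (x ∘ Sum.inr) := dot_self_nonneg _
  cases i with
  | inl i =>
      have hs : (x (Sum.inl i)) ^ 2 ≤ (x ∘ Sum.inl) ⬝ᵥ (x ∘ Sum.inl) := by
        simpa [sq, dotProduct] using
          Finset.single_le_sum (f := fun j => x (Sum.inl j) * x (Sum.inl j))
            (fun j _ => mul_self_nonneg _) (Finset.mem_univ i)
      have hm : min α β ≤ α := min_le_left _ _
      have h0 : (0:ℝ) ≤ (x (Sum.inl i)) ^ 2 := sq_nonneg _
      have hm0 : 0 < min α β := lt_min hα hβ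
      unfold q
      nlinarith
  | inr i =>
      have hs : (x (Sum.inr i)) ^ 2 ≤ (x ∘ Sum.inr) ⬝ᵥ (x ∘ Sum.inr) := by
        simpa [sq, dotProduct] using
          Finset.single_le_sum (f := fun j => x (Sum.inr j) * x (Sum.inr j))
            (fun j _ => mul_self_nonneg _) (Finset.mem_univ i)
      have hm : min α β ≤ β := min_le_right _ _
      have h0 : (0:ℝ) ≤ (x (Sum.inr i)) ^ 2 := sq_nonneg _
      have hm0 : 0 < min α β := lt_min hα hβ
      unfold q
      nlinarith

lemma q_continuous (α β : ℝ) : Continuous (q (n := n) (m := m) α β) := by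
  have h1 : Continuous fun x : Fin n ⊕ Fin m → ℝ => x ∘ Sum.inl :=
    continuous_pi fun i => continuous_apply _
  have h2 : Continuous fun x : Fin n ⊕ Fin m → ℝ => x ∘ Sum.inr :=
    continuous_pi fun i => continuous_apply _
  exact (continuous_const.mul (h1.dotProduct h1)).add
    (continuous_const.mul (h2.dotProduct h2))

lemma quad_block (A : Matrix (Fin n) (Fin n) ℝ) (B : Matrix (Fin m) (Fin n) ℝ)
    (C : Matrix (Fin m) (Fin m) ℝ) (x : Fin n ⊕ Fin m → ℝ) :
    x ⬝ᵥ ((fromBlocks A Bᵀ (-B) C) *ᵥ x)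
      = (x ∘ Sum.inl) ⬝ᵥ (A *ᵥ (x ∘ Sum.inl)) + (x ∘ Sum.inr) ⬝ᵥ (C *ᵥ (x ∘ Sum.inr)) := by
  have hx : x = Sum.elim (x ∘ Sum.inl) (x ∘ Sum.inr) := (Sum.elim_comp_inl_inr x).symm
  rw [hx, fromBlocks_mulVec, sumElim_dotProduct_sumElim]
  have hbt : (x ∘ Sum.inl) ⬝ᵥ (Bᵀ *ᵥ (x ∘ Sum.inr)) = (x ∘ Sum.inr) ⬝ᵥ (B *ᵥ (x ∘ Sum.inl)) := by
    rw [dotProduct_mulVec, vecMul_transpose, dotProduct_comm]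
  simp only [dotProduct_add, neg_mulVec, dotProduct_neg, Sum.elim_comp_inl_inr]
  rw [hbt]; ring

lemma fromBlocks_sub' (a a' : Matrix (Fin n) (Fin n) ℝ) (b b' : Matrix (Fin n) (Fin m) ℝ)
    (c c' : Matrix (Fin m) (Fin n) ℝ) (d d' : Matrix (Fin m) (Fin m) ℝ) :
    fromBlocks a b c d - fromBlocks a' b' c' d'
      = fromBlocks (a - a') (b - b') (c - c') (d - d') := by
  rw [sub_eq_add_neg, fromBlocks_neg, fromBlocks_add]
  simp [sub_eq_add_neg]

lemma fromBlocks_mulVec_inl (M₁₁ : Matrix (Fin n) (Fin n) ℝ) (M₁₂ : Matrix (Fin n) (Fin m) ℝ)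
    (M₂₁ : Matrix (Fin m) (Fin n) ℝ) (M₂₂ : Matrix (Fin m) (Fin m) ℝ)
    (v : Fin n ⊕ Fin m → ℝ) :
    (fromBlocks M₁₁ M₁₂ M₂₁ M₂₂ *ᵥ v) ∘ Sum.inl
      = M₁₁ *ᵥ (v ∘ Sum.inl) + M₁₂ *ᵥ (v ∘ Sum.inr) := by
  conv_lhs => rw [← Sum.elim_comp_inl_inr v, fromBlocks_mulVec]
  rfl

lemma fromBlocks_mulVec_inr (M₁₁ : Matrix (Fin n) (Fin n) ℝ) (M₁₂ : Matrix (Fin n) (Fin m) ℝ)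
    (M₂₁ : Matrix (Fin m) (Fin n) ℝ) (M₂₂ : Matrix (Fin m) (Fin m) ℝ)
    (v : Fin n ⊕ Fin m → ℝ) :
    (fromBlocks M₁₁ M₁₂ M₂₁ M₂₂ *ᵥ v) ∘ Sum.inr
      = M₂₁ *ᵥ (v ∘ Sum.inl) + M₂₂ *ᵥ (v ∘ Sum.inr) := by
  conv_lhs => rw [← Sum.elim_comp_inl_inr v, fromBlocks_mulVec]
  rfl

/-- `q` as a quadratic form of the block-diagonal matrix `D`. -/
lemma q_eq_D (α β : ℝ) (x : Fin n ⊕ Fin m → ℝ) :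
    q α β x = x ⬝ᵥ ((fromBlocks (α • (1 : Matrix (Fin n) (Fin n) ℝ)) 0 0
      (β • (1 : Matrix (Fin m) (Fin m) ℝ))) *ᵥ x) := by
  have hx : x = Sum.elim (x ∘ Sum.inl) (x ∘ Sum.inr) := (Sum.elim_comp_inl_inr x).symm
  conv_rhs => rw [hx, fromBlocks_mulVec, sumElim_dotProduct_sumElim]
  simp only [Sum.elim_comp_inl_inr, zero_mulVec, add_zero, zero_add, smul_mulVec,
    one_mulVec, dotProduct_smul, smul_eq_mul]
  rfl

end MGSSaux

open MGSSaux

theorem MGSS_iteration_converges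
    (n m : ℕ) (hn : 0 < n) (hm : 0 < m) (hmn : m ≤ n)
    (A : Matrix (Fin n) (Fin n) ℝ) (B : Matrix (Fin m) (Fin n) ℝ)
    (C : Matrix (Fin m) (Fin m) ℝ)
    (hA : A.PosDef) (hC : C.PosSemidef) (hB : B.rank = m)
    (α β : ℝ) (hα : 0 < α) (hβ : 0 < β)
    (M N : Matrix (Fin n ⊕ Fin m) (Fin n ⊕ Fin m) ℝ)
    (hM : M = (1/2 : ℝ) • Matrix.fromBlocks
      (α • (1 : Matrix (Fin n) (Fin n) ℝ) + A) Bᵀ (-B)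
      (β • (1 : Matrix (Fin m) (Fin m) ℝ) + C))
    (hN : N = (1/2 : ℝ) • Matrix.fromBlocks
      (α • (1 : Matrix (Fin n) (Fin n) ℝ) - A) (-Bᵀ) B
      (β • (1 : Matrix (Fin m) (Fin m) ℝ) - C))
    (b : Fin n ⊕ Fin m → ℝ)
    (u : ℕ → Fin n ⊕ Fin m → ℝ)
    (hiter : ∀ k : ℕ, u (k + 1) = M⁻¹ *ᵥ (N *ᵥ u k + b)) :
    ∃ ustar : Fin n ⊕ Fin m → ℝ,
      (Matrix.fromBlocks A Bᵀ (-B) C) *ᵥ ustar = b ∧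
      (∀ v : Fin n ⊕ Fin m → ℝ, (Matrix.fromBlocks A Bᵀ (-B) C) *ᵥ v = b → v = ustar) ∧
      Filter.Tendsto u Filter.atTop (nhds ustar) := by
  classical
  set 𝒜 : Matrix (Fin n ⊕ Fin m) (Fin n ⊕ Fin m) ℝ := fromBlocks A Bᵀ (-B) C with h𝒜
  set D : Matrix (Fin n ⊕ Fin m) (Fin n ⊕ Fin m) ℝ :=
    fromBlocks (α • (1 : Matrix (Fin n) (Fin n) ℝ)) 0 0
      (β • (1 : Matrix (Fin m) (Fin m) ℝ)) with hD
  -- block identities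
  have hsum : M + N = D := by
    have e11 : (1/2 : ℝ) • ((α • (1 : Matrix (Fin n) (Fin n) ℝ) + A) + (α • 1 - A)) = α • 1 := by
      module
    have e12 : (1/2 : ℝ) • (Bᵀ + -Bᵀ) = (0 : Matrix (Fin n) (Fin m) ℝ) := by module
    have e21 : (1/2 : ℝ) • (-B + B) = (0 : Matrix (Fin m) (Fin n) ℝ) := by module
    have e22 : (1/2 : ℝ) • ((β • (1 : Matrix (Fin m) (Fin m) ℝ) + C) + (β • 1 - C)) = β • 1 := by
      module
    rw [hM, hN, ← smul_add, fromBlocks_add, fromBlocks_smul, e11, e12, e21, e22, hD]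
  have hdiff : M - N = 𝒜 := by
    have e11 : (1/2 : ℝ) • ((α • (1 : Matrix (Fin n) (Fin n) ℝ) + A) - (α • 1 - A)) = A := by
      module
    have e12 : (1/2 : ℝ) • (Bᵀ - -Bᵀ) = Bᵀ := by module
    have e21 : (1/2 : ℝ) • (-B - B) = -B := by module
    have e22 : (1/2 : ℝ) • ((β • (1 : Matrix (Fin m) (Fin m) ℝ) + C) - (β • 1 - C)) = C := by
      module
    rw [hM, hN, ← smul_sub, MGSSaux.fromBlocks_sub', fromBlocks_smul, e11, e12, e21, e22, h𝒜]
  -- full row rank of B: `Bᵀ` has trivial kernel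
  have hBT : ∀ v : Fin m → ℝ, Bᵀ *ᵥ v = 0 → v = 0 := by
    intro v hv
    have hr : Bᵀ.rank = m := by rw [rank_transpose, hB]
    rw [Matrix.rank] at hr
    have hrn := LinearMap.finrank_range_add_finrank_ker (Bᵀ.mulVecLin)
    rw [hr, Module.finrank_fintype_fun_eq_card, Fintype.card_fin] at hrn
    have hker0 : Module.finrank ℝ (LinearMap.ker Bᵀ.mulVecLin) = 0 := by omega
    have hkerbot : LinearMap.ker Bᵀ.mulVecLin = ⊥ := Submodule.finrank_eq_zero.mp hker0
    have hmem : v ∈ LinearMap.ker Bᵀ.mulVecLin := by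
      rw [LinearMap.mem_ker, mulVecLin_apply]; exact hv
    rw [hkerbot, Submodule.mem_bot] at hmem
    exact hmem
  -- quadratic forms
  have hAq : ∀ v : Fin n → ℝ, 0 ≤ v ⬝ᵥ (A *ᵥ v) := fun v => by simpa using hA.posSemidef.dotProduct_mulVec_nonneg v
  have hCq : ∀ v : Fin m → ℝ, 0 ≤ v ⬝ᵥ (C *ᵥ v) := fun v => by simpa using hC.dotProduct_mulVec_nonneg v
  have hApos : ∀ v : Fin n → ℝ, v ≠ 0 → 0 < v ⬝ᵥ (A *ᵥ v) := fun v hv => by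
    simpa using hA.dotProduct_mulVec_pos hv
  have hquad : ∀ x : Fin n ⊕ Fin m → ℝ, x ⬝ᵥ (𝒜 *ᵥ x)
      = (x ∘ Sum.inl) ⬝ᵥ (A *ᵥ (x ∘ Sum.inl)) + (x ∘ Sum.inr) ⬝ᵥ (C *ᵥ (x ∘ Sum.inr)) :=
    fun x => quad_block A B C x
  -- kernel of 𝒜 is trivial
  have hker : ∀ x : Fin n ⊕ Fin m → ℝ, 𝒜 *ᵥ x = 0 → x = 0 := by
    intro x hx
    have h0 : x ⬝ᵥ (𝒜 *ᵥ x) = 0 := by rw [hx, dotProduct_zero]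
    rw [hquad] at h0
    have hA0 : (x ∘ Sum.inl) ⬝ᵥ (A *ᵥ (x ∘ Sum.inl)) = 0 := by
      have := hAq (x ∘ Sum.inl); have := hCq (x ∘ Sum.inr); linarith
    have hC0 : (x ∘ Sum.inr) ⬝ᵥ (C *ᵥ (x ∘ Sum.inr)) = 0 := by
      have := hAq (x ∘ Sum.inl); have := hCq (x ∘ Sum.inr); linarith
    have hx1 : x ∘ Sum.inl = 0 := by
      by_contra hne
      exact absurd hA0 (ne_of_gt (hApos _ hne))
    have hinl : (𝒜 *ᵥ x) ∘ Sum.inl = A *ᵥ (x ∘ Sum.inl) + Bᵀ *ᵥ (x ∘ Sum.inr) :=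
      fromBlocks_mulVec_inl A Bᵀ (-B) C x
    have hBT0 : Bᵀ *ᵥ (x ∘ Sum.inr) = 0 := by
      have h2 : (0 : Fin n → ℝ) = A *ᵥ (x ∘ Sum.inl) + Bᵀ *ᵥ (x ∘ Sum.inr) := by
        rw [← hinl, hx]; rfl
      rw [hx1, mulVec_zero, zero_add] at h2
      exact h2.symm
    have hx2 : x ∘ Sum.inr = 0 := hBT _ hBT0
    funext i
    cases i with
    | inl i => exact congrFun hx1 i
    | inr i => exact congrFun hx2 i
  -- kernel of M is trivial
  have hMker : ∀ x : Fin n ⊕ Fin m → ℝ, M *ᵥ x = 0 → x = 0 := by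
    intro x hx
    have hNx : N *ᵥ x = D *ᵥ x := by
      rw [← hsum, add_mulVec, hx, zero_add]
    have hAx : 𝒜 *ᵥ x = -(D *ᵥ x) := by
      rw [← hdiff, sub_mulVec, hx, zero_sub, hNx]
    have hqx : q α β x = x ⬝ᵥ (D *ᵥ x) := by rw [q_eq_D, hD]
    have hneg : x ⬝ᵥ (D *ᵥ x) = -(x ⬝ᵥ (𝒜 *ᵥ x)) := by
      rw [hAx, dotProduct_neg, neg_neg]
    have hq0 : q α β x ≤ 0 := by
      rw [hqx, hneg]
      have := hquad x
      have := hAq (x ∘ Sum.inl); have := hCq (x ∘ Sum.inr)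
      linarith
    exact q_eq_zero hα hβ (le_antisymm hq0 (q_nonneg hα.le hβ.le x))
  have hMunit : IsUnit M := by
    rw [← Matrix.mulVec_injective_iff_isUnit]
    intro a b hab
    have : M *ᵥ (a - b) = 0 := by rw [mulVec_sub, hab, sub_self]
    exact sub_eq_zero.mp (hMker _ this)
  have hMdet : IsUnit M.det := (Matrix.isUnit_iff_isUnit_det M).mp hMunit
  have hAunit : IsUnit 𝒜 := by
    rw [← Matrix.mulVec_injective_iff_isUnit]
    intro a b hab
    have : 𝒜 *ᵥ (a - b) = 0 := by rw [mulVec_sub, hab, sub_self]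
    exact sub_eq_zero.mp (hker _ this)
  have hAdet : IsUnit 𝒜.det := (Matrix.isUnit_iff_isUnit_det 𝒜).mp hAunit
  have hMinv : ∀ v : Fin n ⊕ Fin m → ℝ, M *ᵥ (M⁻¹ *ᵥ v) = v := by
    intro v; rw [mulVec_mulVec, mul_nonsing_inv _ hMdet, one_mulVec]
  -- the iteration map
  set T : (Fin n ⊕ Fin m → ℝ) → (Fin n ⊕ Fin m → ℝ) := fun x => M⁻¹ *ᵥ (N *ᵥ x) with hT
  have hTspec : ∀ x, M *ᵥ (T x) = N *ᵥ x := fun x => hMinv _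
  -- central identity
  have key : ∀ x y : Fin n ⊕ Fin m → ℝ, M *ᵥ y = N *ᵥ x →
      D *ᵥ (x - y) = 𝒜 *ᵥ (x + y) := by
    intro x y h
    rw [← hsum, ← hdiff]
    have h2 : M *ᵥ x - M *ᵥ y + (N *ᵥ x - N *ᵥ y)
        = M *ᵥ x + M *ᵥ y - (N *ᵥ x + N *ᵥ y) := by
      rw [h]; abel
    calc (M + N) *ᵥ (x - y) = M *ᵥ x - M *ᵥ y + (N *ᵥ x - N *ᵥ y) := by
          rw [add_mulVec, mulVec_sub, mulVec_sub]
      _ = M *ᵥ x + M *ᵥ y - (N *ᵥ x + N *ᵥ y) := h2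
      _ = (M - N) *ᵥ (x + y) := by rw [sub_mulVec, mulVec_add, mulVec_add]
  -- D is symmetric
  have hDsym : ∀ x y : Fin n ⊕ Fin m → ℝ, x ⬝ᵥ (D *ᵥ y) = y ⬝ᵥ (D *ᵥ x) := by
    have hDT : Dᵀ = D := by
      rw [hD, fromBlocks_transpose]
      simp [transpose_smul]
    intro x y
    rw [dotProduct_mulVec, ← hDT, vecMul_transpose, hDT, dotProduct_comm]
  -- polarization
  have hpolar : ∀ x y : Fin n ⊕ Fin m → ℝ,
      q α β x - q α β y = (x + y) ⬝ᵥ (D *ᵥ (x - y)) := by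
    intro x y
    have hqx : q α β x = x ⬝ᵥ (D *ᵥ x) := by rw [q_eq_D, hD]
    have hqy : q α β y = y ⬝ᵥ (D *ᵥ y) := by rw [q_eq_D, hD]
    rw [hqx, hqy]
    have hsym := hDsym x y
    simp only [mulVec_sub, dotProduct_sub, add_dotProduct]
    have c1 : (D *ᵥ x) ⬝ᵥ y = y ⬝ᵥ (D *ᵥ x) := dotProduct_comm _ _
    have c2 : (D *ᵥ y) ⬝ᵥ x = x ⬝ᵥ (D *ᵥ y) := dotProduct_comm _ _
    linarith [dotProduct_comm x (D *ᵥ x), dotProduct_comm y (D *ᵥ y)]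
  -- one step decrease
  have step : ∀ x : Fin n ⊕ Fin m → ℝ,
      q α β x - q α β (T x)
        = ((x + T x) ∘ Sum.inl) ⬝ᵥ (A *ᵥ ((x + T x) ∘ Sum.inl))
          + ((x + T x) ∘ Sum.inr) ⬝ᵥ (C *ᵥ ((x + T x) ∘ Sum.inr)) := by
    intro x
    rw [hpolar x (T x)]
    have hk := key x (T x) (hTspec x)
    rw [hk]
    have : (x + T x) ⬝ᵥ (𝒜 *ᵥ (x + T x)) = _ := hquad (x + T x)
    exact this
  have mono : ∀ x, q α β (T x) ≤ q α β x := by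
    intro x
    have := step x
    have := hAq ((x + T x) ∘ Sum.inl)
    have := hCq ((x + T x) ∘ Sum.inr)
    linarith
  -- equality case of one step
  have eqcase : ∀ x : Fin n ⊕ Fin m → ℝ, q α β (T x) = q α β x →
      ((x + T x) ∘ Sum.inl = 0 ∧ (x - T x) ∘ Sum.inr = 0 ∧
       α • ((x - T x) ∘ Sum.inl) = Bᵀ *ᵥ ((x + T x) ∘ Sum.inr)) := by
    intro x hqe
    have hst := step x
    have hA0 : ((x + T x) ∘ Sum.inl) ⬝ᵥ (A *ᵥ ((x + T x) ∘ Sum.inl)) = 0 := by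
      have := hAq ((x + T x) ∘ Sum.inl); have := hCq ((x + T x) ∘ Sum.inr); linarith
    have hC0 : ((x + T x) ∘ Sum.inr) ⬝ᵥ (C *ᵥ ((x + T x) ∘ Sum.inr)) = 0 := by
      have := hAq ((x + T x) ∘ Sum.inl); have := hCq ((x + T x) ∘ Sum.inr); linarith
    have hs1 : (x + T x) ∘ Sum.inl = 0 := by
      by_contra hne
      exact absurd hA0 (ne_of_gt (hApos _ hne))
    have hCs2 : C *ᵥ ((x + T x) ∘ Sum.inr) = 0 := by
      have := (hC.dotProduct_mulVec_zero_iff ((x + T x) ∘ Sum.inr)).mp (by simpa using hC0)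
      exact this
    have hk := key x (T x) (hTspec x)
    -- inl component
    have hk1 : (D *ᵥ (x - T x)) ∘ Sum.inl = (𝒜 *ᵥ (x + T x)) ∘ Sum.inl := by rw [hk]
    rw [hD, h𝒜, fromBlocks_mulVec_inl, fromBlocks_mulVec_inl] at hk1
    rw [zero_mulVec, add_zero, smul_mulVec, one_mulVec] at hk1
    rw [hs1, mulVec_zero, zero_add] at hk1
    -- inr component
    have hk2 : (D *ᵥ (x - T x)) ∘ Sum.inr = (𝒜 *ᵥ (x + T x)) ∘ Sum.inr := by rw [hk]
    rw [hD, h𝒜, fromBlocks_mulVec_inr, fromBlocks_mulVec_inr] at hk2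
    rw [zero_mulVec, zero_add, smul_mulVec, one_mulVec] at hk2
    rw [hs1, mulVec_zero, zero_add, hCs2] at hk2
    have hd2 : (x - T x) ∘ Sum.inr = 0 := by
      have := hk2
      exact smul_eq_zero.mp this |>.resolve_left (by exact_mod_cast hβ.ne')
    exact ⟨hs1, hd2, hk1⟩
  -- two-step strict decrease
  have twostep : ∀ x : Fin n ⊕ Fin m → ℝ, q α β (T (T x)) = q α β x → x = 0 := by
    intro x h
    have h1 : q α β (T x) ≤ q α β x := mono x
    have h2 : q α β (T (T x)) ≤ q α β (T x) := mono (T x)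
    have e1 : q α β (T x) = q α β x := le_antisymm h1 (by linarith)
    have e2 : q α β (T (T x)) = q α β (T x) := by linarith
    obtain ⟨s1, d2, eq1⟩ := eqcase x e1
    obtain ⟨s1', d2', eq2⟩ := eqcase (T x) e2
    -- component abbreviations
    have hy1 : (T x) ∘ Sum.inl = -(x ∘ Sum.inl) := by
      have hs : x ∘ Sum.inl + (T x) ∘ Sum.inl = 0 := s1
      exact eq_neg_of_add_eq_zero_right hs
    have hy2 : (T x) ∘ Sum.inr = x ∘ Sum.inr := by
      have hs : x ∘ Sum.inr - (T x) ∘ Sum.inr = 0 := d2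
      exact (sub_eq_zero.mp hs).symm
    have hz1 : (T (T x)) ∘ Sum.inl = x ∘ Sum.inl := by
      have hs : (T x) ∘ Sum.inl + (T (T x)) ∘ Sum.inl = 0 := s1'
      have h' := eq_neg_of_add_eq_zero_right hs
      rw [h', hy1, neg_neg]
    have hz2 : (T (T x)) ∘ Sum.inr = x ∘ Sum.inr := by
      have h' : (T x) ∘ Sum.inr - (T (T x)) ∘ Sum.inr = 0 := d2'
      rw [hy2] at h'
      exact (sub_eq_zero.mp h').symm
    -- rewrite the two Bᵀ equations
    have heq1 : α • (x ∘ Sum.inl + x ∘ Sum.inl) = Bᵀ *ᵥ (x ∘ Sum.inr + x ∘ Sum.inr) := by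
      have : (x - T x) ∘ Sum.inl = x ∘ Sum.inl - (T x) ∘ Sum.inl := rfl
      rw [this, hy1, sub_neg_eq_add] at eq1
      have h2' : (x + T x) ∘ Sum.inr = x ∘ Sum.inr + (T x) ∘ Sum.inr := rfl
      rw [h2', hy2] at eq1
      exact eq1
    have heq2 : α • (-(x ∘ Sum.inl) - x ∘ Sum.inl) = Bᵀ *ᵥ (x ∘ Sum.inr + x ∘ Sum.inr) := by
      have h1' : (T x - T (T x)) ∘ Sum.inl = (T x) ∘ Sum.inl - (T (T x)) ∘ Sum.inl := rfl
      rw [h1', hy1, hz1] at eq2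
      have h2' : (T x + T (T x)) ∘ Sum.inr = (T x) ∘ Sum.inr + (T (T x)) ∘ Sum.inr := rfl
      rw [h2', hy2, hz2] at eq2
      exact eq2
    have hx1 : x ∘ Sum.inl = 0 := by
      have hcomb : α • (x ∘ Sum.inl + x ∘ Sum.inl)
          = α • (-(x ∘ Sum.inl) - x ∘ Sum.inl) := by rw [heq1, heq2]
      funext i
      have hci := congrFun hcomb i
      simp only [Pi.smul_apply, Pi.add_apply, Pi.sub_apply, Pi.neg_apply,
        Function.comp_apply, smul_eq_mul] at hci
      show x (Sum.inl i) = 0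
      have h4 : α * x (Sum.inl i) = 0 := by linarith
      exact (mul_eq_zero.mp h4).resolve_left hα.ne'
    have hx2 : x ∘ Sum.inr = 0 := by
      have hB0 : Bᵀ *ᵥ (x ∘ Sum.inr + x ∘ Sum.inr) = 0 := by
        rw [← heq1, hx1]
        funext i
        simp
      have h2 := hBT _ hB0
      funext i
      have hci := congrFun h2 i
      simp only [Pi.add_apply, Function.comp_apply, Pi.zero_apply] at hci
      show x (Sum.inr i) = 0
      linarith
    funext i
    cases i with
    | inl i => exact congrFun hx1 i
    | inr i => exact congrFun hx2 i
  -- continuity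
  have hTcont : Continuous T := by
    rw [hT]
    exact continuous_const.matrix_mulVec (continuous_const.matrix_mulVec continuous_id)
  have hgcont : Continuous fun x => q α β (T (T x)) :=
    (q_continuous α β).comp (hTcont.comp hTcont)
  -- the unit sphere of q
  set S : Set (Fin n ⊕ Fin m → ℝ) := {x | q α β x = 1} with hS
  have hγ : 0 < min α β := lt_min hα hβ
  have hScomp : IsCompact S := by
    apply Metric.isCompact_of_isClosed_isBounded
    · exact isClosed_eq (q_continuous α β) continuous_const
    · rw [Metric.isBounded_iff_subset_closedBall 0]
      refine ⟨Real.sqrt (min α β)⁻¹, fun x hx => ?_⟩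
      rw [Metric.mem_closedBall, dist_zero_right]
      rw [pi_norm_le_iff_of_nonneg (Real.sqrt_nonneg _)]
      intro i
      have hq1 : min α β * (x i) ^ 2 ≤ 1 := by
        have := q_coord hα hβ x i
        have hx1 : q α β x = 1 := hx
        linarith
      have h2 : (x i) ^ 2 ≤ (min α β)⁻¹ := by
        nlinarith [hq1, hγ, mul_inv_cancel₀ hγ.ne']
      calc ‖x i‖ = |x i| := rfl
        _ = Real.sqrt ((x i) ^ 2) := (Real.sqrt_sq_eq_abs _).symm
        _ ≤ Real.sqrt (min α β)⁻¹ := Real.sqrt_le_sqrt h2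
  -- the sphere is nonempty
  have hSne : S.Nonempty := by
    refine ⟨Sum.elim (Pi.single ⟨0, hn⟩ (Real.sqrt α⁻¹)) 0, ?_⟩
    show q α β _ = 1
    unfold q
    rw [Sum.elim_comp_inl, Sum.elim_comp_inr]
    rw [single_dotProduct]
    simp only [Pi.single_eq_same, zero_dotProduct, mul_zero, add_zero]
    rw [Real.mul_self_sqrt (by positivity)]
    field_simp
  -- maximum of the two-step form on the sphere
  obtain ⟨xmax, hxmaxS, hxmaxmax⟩ :=
    hScomp.exists_isMaxOn hSne hgcont.continuousOn
  set c : ℝ := q α β (T (T xmax)) with hc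
  have hmax : ∀ x ∈ S, q α β (T (T x)) ≤ c := fun x hx => hxmaxmax hx
  have hc0 : 0 ≤ c := q_nonneg hα.le hβ.le _
  have hc1 : c < 1 := by
    have hqmax : q α β xmax = 1 := hxmaxS
    have hle : c ≤ 1 := by
      have := mono xmax
      have := mono (T xmax)
      rw [hc]; linarith
    rcases lt_or_eq_of_le hle with h | h
    · exact h
    · exfalso
      have h0 : xmax = 0 := twostep xmax (by rw [← hc, h, hqmax])
      rw [h0] at hqmax
      have : q α β (0 : Fin n ⊕ Fin m → ℝ) = 0 := by
        unfold q; simp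
      rw [this] at hqmax
      norm_num at hqmax
  -- scaling: two-step contraction everywhere
  have hT0 : T 0 = 0 := by
    rw [hT]; simp
  have hscale : ∀ x : Fin n ⊕ Fin m → ℝ, q α β (T (T x)) ≤ c * q α β x := by
    intro x
    rcases eq_or_ne x 0 with rfl | hx0
    · rw [hT0, hT0]
      have : q α β (0 : Fin n ⊕ Fin m → ℝ) = 0 := by unfold q; simp
      rw [this, mul_zero]
    · have hqx : 0 < q α β x :=
        lt_of_le_of_ne (q_nonneg hα.le hβ.le x) (fun h => hx0 (q_eq_zero hα hβ h.symm))
      set t : ℝ := (Real.sqrt (q α β x))⁻¹ with ht'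
      have hts : 0 < Real.sqrt (q α β x) := Real.sqrt_pos.mpr hqx
      have ht2 : t ^ 2 * q α β x = 1 := by
        rw [ht', inv_pow, Real.sq_sqrt hqx.le, inv_mul_cancel₀ hqx.ne']
      have htmem : t • x ∈ S := by
        show q α β (t • x) = 1
        rw [q_smul, ht2]
      have hTt : ∀ v : Fin n ⊕ Fin m → ℝ, T (t • v) = t • T v := by
        intro v
        rw [hT]
        simp only [mulVec_smul]
      have hgt : q α β (T (T (t • x))) = t ^ 2 * q α β (T (T x)) := by
        rw [hTt, hTt, q_smul]
      have hle := hmax _ htmem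
      rw [hgt] at hle
      have ht0 : 0 < t ^ 2 := by positivity
      -- t² g x ≤ c = c * (t² q x)  ⇒ g x ≤ c q x
      have := mul_le_mul_of_nonneg_left hle (le_of_lt (inv_pos.mpr ht0))
      rw [← mul_assoc, inv_mul_cancel₀ ht0.ne', one_mul] at this
      calc q α β (T (T x)) ≤ (t ^ 2)⁻¹ * c := this
        _ = c * q α β x := by
          have : (t ^ 2)⁻¹ = q α β x := by
            exact inv_eq_of_mul_eq_one_right ht2
          rw [this]; ring
  -- the unique solution
  set ustar : Fin n ⊕ Fin m → ℝ := 𝒜⁻¹ *ᵥ b with hustar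
  have hust : 𝒜 *ᵥ ustar = b := by
    rw [hustar, mulVec_mulVec, mul_nonsing_inv _ hAdet, one_mulVec]
  have huniq : ∀ v : Fin n ⊕ Fin m → ℝ, 𝒜 *ᵥ v = b → v = ustar := by
    intro v hv
    have h0 : 𝒜 *ᵥ (v - ustar) = 0 := by rw [mulVec_sub, hv, hust, sub_self]
    exact sub_eq_zero.mp (hker _ h0)
  -- the error sequence
  set e : ℕ → Fin n ⊕ Fin m → ℝ := fun k => u k - ustar with he'
  have hfix : M⁻¹ *ᵥ (N *ᵥ ustar + b) = ustar := by
    have h1 : N *ᵥ ustar + b = M *ᵥ ustar := by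
      have h2 : M *ᵥ ustar - N *ᵥ ustar = b := by
        rw [← sub_mulVec, hdiff, hust]
      rw [← h2]; abel
    rw [h1, mulVec_mulVec, nonsing_inv_mul _ hMdet, one_mulVec]
  have he : ∀ k, e (k + 1) = T (e k) := by
    intro k
    show u (k + 1) - ustar = T (u k - ustar)
    rw [hiter k, hT]
    show M⁻¹ *ᵥ (N *ᵥ u k + b) - ustar = M⁻¹ *ᵥ (N *ᵥ (u k - ustar))
    rw [mulVec_sub N]
    have h3 : N *ᵥ u k - N *ᵥ ustar = (N *ᵥ u k + b) - (N *ᵥ ustar + b) := by abel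
    rw [h3, mulVec_sub M⁻¹, hfix]
  have hq1 : ∀ k, q α β (e (k + 1)) ≤ q α β (e k) := by
    intro k; rw [he k]; exact mono (e k)
  have hanti : Antitone fun k => q α β (e k) := antitone_nat_of_succ_le hq1
  have hq2 : ∀ k, q α β (e (k + 2)) ≤ c * q α β (e k) := by
    intro k
    have : e (k + 2) = T (T (e k)) := by rw [he (k + 1), he k]
    rw [this]
    exact hscale (e k)
  have geo : ∀ j : ℕ, q α β (e (2 * j)) ≤ c ^ j * q α β (e 0) := by
    intro j
    induction j with
    | zero => simp
    | succ j ih =>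
        have h1 : 2 * (j + 1) = 2 * j + 2 := by ring
        rw [h1]
        calc q α β (e (2 * j + 2)) ≤ c * q α β (e (2 * j)) := hq2 _
          _ ≤ c * (c ^ j * q α β (e 0)) := by
              exact mul_le_mul_of_nonneg_left ih hc0
          _ = c ^ (j + 1) * q α β (e 0) := by ring
  have hbound : ∀ k, q α β (e k) ≤ c ^ (k / 2) * q α β (e 0) := by
    intro k
    have h1 : 2 * (k / 2) ≤ k := by omega
    exact (hanti h1).trans (geo (k / 2))
  have hdiv : Filter.Tendsto (fun k : ℕ => k / 2) atTop atTop := by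
    rw [tendsto_atTop_atTop]
    intro bb
    exact ⟨2 * bb, fun k hk => by omega⟩
  have hgeo0 : Filter.Tendsto (fun k : ℕ => c ^ (k / 2) * q α β (e 0)) atTop (nhds 0) := by
    have h1 := (tendsto_pow_atTop_nhds_zero_of_lt_one hc0 hc1).comp hdiv
    have h2 := h1.mul_const (q α β (e 0))
    simpa using h2
  have hqtend : Filter.Tendsto (fun k => q α β (e k)) atTop (nhds 0) :=
    squeeze_zero (fun k => q_nonneg hα.le hβ.le _) hbound hgeo0
  have hcoord : ∀ i, Filter.Tendsto (fun k => e k i) atTop (nhds 0) := by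
    intro i
    have hsq : Filter.Tendsto (fun k => (e k i) ^ 2) atTop (nhds 0) := by
      apply squeeze_zero (fun k => sq_nonneg _) (g := fun k => (min α β)⁻¹ * q α β (e k))
      · intro k
        have := q_coord hα hβ (e k) i
        have h5 : (min α β)⁻¹ * (min α β * (e k i) ^ 2) ≤ (min α β)⁻¹ * q α β (e k) :=
          mul_le_mul_of_nonneg_left this (inv_pos.mpr hγ).le
        rw [← mul_assoc, inv_mul_cancel₀ hγ.ne', one_mul] at h5
        exact h5
      · have := hqtend.const_mul (min α β)⁻¹
        simpa using this
    have habs : Filter.Tendsto (fun k => |e k i|) atTop (nhds 0) := by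
      have heq : (fun k => |e k i|) = fun k => Real.sqrt ((e k i) ^ 2) :=
        funext fun k => (Real.sqrt_sq_eq_abs _).symm
      rw [heq]
      have h6 := (Real.continuous_sqrt.tendsto 0).comp hsq
      simpa [Function.comp_def] using h6
    exact (tendsto_zero_iff_abs_tendsto_zero _).mpr habs
  refine ⟨ustar, hust, huniq, ?_⟩
  rw [tendsto_pi_nhds]
  intro i
  have heu : ∀ k, u k i = e k i + ustar i := by
    intro k
    show u k i = (u k - ustar) i + ustar i
    simp
  have h7 := (hcoord i).add (tendsto_const_nhds (x := ustar i))
  rw [zero_add] at h7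
  simpa [← heu] using h7
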